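/- Let n ≥ 1, let a ∈ Mₙ(ℂ) be self-adjoint (a* = a), and let v, w ∈ ℂⁿ be unit vectors. Then |⟨a v, v⟩ − ⟨a w, w⟩|² ≤ Σ_{i,j} |(a v)_i · w_j − v_i · (a w)_j|², i.e. the squared difference of the two expectation values is bounded by the squared ℓ²-norm of the vector a(v) ⊗ w − v ⊗ a(w) in ℂⁿ ⊗ ℂⁿ ≅ ℂ^(Fin n × Fin n). -/

import Mathlib

open Matrix

/-- for a self-adjoint `a ∈ Mₙ(ℂ)` and unit vectors `v, w ∈ ℂⁿ`, the
squared difference of expectation values `|⟨av, v⟩ − ⟨aw, w⟩|²` is bounded by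
`‖a(v) ⊗ w − v ⊗ a(w)‖²`, the squared ℓ²-norm in `ℂⁿ ⊗ ℂⁿ ≅ ℂ^(Fin n × Fin n)`. -/
theorem stmt12 (n : ℕ) (hn : 1 ≤ n) (a : Matrix (Fin n) (Fin n) ℂ)
    (ha : a.conjTranspose = a) (v w : Fin n → ℂ)
    (hv : ∑ i, ‖v i‖ ^ 2 = 1) (hw : ∑ i, ‖w i‖ ^ 2 = 1) :
    ‖(∑ i, starRingEnd ℂ (v i) * a.mulVec v i) -
        ∑ i, starRingEnd ℂ (w i) * a.mulVec w i‖ ^ 2 ≤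
      ∑ i, ∑ j, ‖a.mulVec v i * w j - v i * a.mulVec w j‖ ^ 2 := by
  set av := a.mulVec v with hav
  set aw := a.mulVec w with haw
  let x : EuclideanSpace ℂ (Fin n × Fin n) := WithLp.toLp 2 (fun p => av p.1 * w p.2 - v p.1 * aw p.2)
  let y : EuclideanSpace ℂ (Fin n × Fin n) := WithLp.toLp 2 (fun p => v p.1 * w p.2)
  have hvc : ∑ i, starRingEnd ℂ (v i) * v i = 1 := by
    have : ∀ i, starRingEnd ℂ (v i) * v i = ((‖v i‖ ^ 2 : ℝ) : ℂ) := by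
      intro i
      rw [Complex.conj_mul']
      norm_cast
    simp_rw [this]
    rw [← Complex.ofReal_sum, hv, Complex.ofReal_one]
  have hwc : ∑ j, starRingEnd ℂ (w j) * w j = 1 := by
    have : ∀ i, starRingEnd ℂ (w i) * w i = ((‖w i‖ ^ 2 : ℝ) : ℂ) := by
      intro i
      rw [Complex.conj_mul']
      norm_cast
    simp_rw [this]
    rw [← Complex.ofReal_sum, hw, Complex.ofReal_one]
  have hinner : (inner ℂ y x : ℂ) =
      (∑ i, starRingEnd ℂ (v i) * av i) - ∑ i, starRingEnd ℂ (w i) * aw i := by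
    rw [PiLp.inner_apply]
    simp only [RCLike.inner_apply', x, y, PiLp.toLp_apply]
    rw [Fintype.sum_prod_type]
    have : ∀ i j, starRingEnd ℂ (v i * w j) * (av i * w j - v i * aw j)
        = (starRingEnd ℂ (v i) * av i) * (starRingEnd ℂ (w j) * w j)
          - (starRingEnd ℂ (v i) * v i) * (starRingEnd ℂ (w j) * aw j) := by
      intro i j; simp only [_root_.map_mul]; ring
    simp_rw [this, Finset.sum_sub_distrib, ← Finset.mul_sum, hwc, mul_one]
    rw [← Finset.sum_mul, hvc, one_mul]
  have hny : ‖y‖ = 1 := by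
    rw [EuclideanSpace.norm_eq]
    have : ∑ p : Fin n × Fin n, ‖y p‖ ^ 2 = 1 := by
      rw [Fintype.sum_prod_type]
      simp only [y, norm_mul, mul_pow]
      rw [← Finset.sum_mul_sum, hv, hw, one_mul]
    rw [this, Real.sqrt_one]
  have hcs := norm_inner_le_norm (𝕜 := ℂ) y x
  rw [hinner, hny, one_mul] at hcs
  have hnx : ‖x‖ ^ 2 = ∑ i, ∑ j, ‖av i * w j - v i * aw j‖ ^ 2 := by
    rw [EuclideanSpace.norm_eq, Real.sq_sqrt (by positivity), Fintype.sum_prod_type]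
  calc ‖(∑ i, starRingEnd ℂ (v i) * av i) - ∑ i, starRingEnd ℂ (w i) * aw i‖ ^ 2
      ≤ ‖x‖ ^ 2 := by gcongr
    _ = _ := hnx
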